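/- A finite digraph U has an acyclic-sink set of cardinality j if and only if every induced subdigraph of U with more than |V(U)| − j vertices contains a vertex of outdegree 0 (in the induced subdigraph). -/

import Mathlib

/-- Induced (restricted) arc relation on a vertex set `S`. -/
def Restrict {V : Type*} (A : V → V → Prop) (S : Set V) : V → V → Prop :=
  fun u v => u ∈ S ∧ v ∈ S ∧ A u v

/-- A digraph (arc relation) is acyclic if it has no directed cycle,
i.e. no vertex reaches itself by a nonempty directed walk. -/
def IsAcyclic {V : Type*} (A : V → V → Prop) : Prop :=
  ∀ v, ¬ Relation.TransGen A v v

/-- The subdigraph induced by `S` is acyclic. -/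
def AcyclicOn {V : Type*} (A : V → V → Prop) (S : Set V) : Prop :=
  IsAcyclic (Restrict A S)

/-- Acyclic homomorphism of digraphs. -/
def IsAcyclicHom {V W : Type*} (A : V → V → Prop) (B : W → W → Prop) (φ : V → W) : Prop :=
  (∀ w : W, AcyclicOn A (φ ⁻¹' {w})) ∧ ∀ u v, A u v → φ u = φ v ∨ B (φ u) (φ v)

/-- Automorphism of a digraph. -/
def IsDigraphAuto {W : Type*} (B : W → W → Prop) (π : W ≃ W) : Prop :=
  ∀ u v, B u v ↔ B (π u) (π v)

/-- `D` (with arcs `A`) is uniquely `C`-colourable (`C` with arcs `B`). -/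
def UniquelyColourable {V W : Type*} (A : V → V → Prop) (B : W → W → Prop) : Prop :=
  (∃ φ : V → W, IsAcyclicHom A B φ ∧ Function.Surjective φ) ∧
  ∀ φ ψ : V → W, IsAcyclicHom A B φ → IsAcyclicHom A B ψ →
    ∃ π : W ≃ W, IsDigraphAuto B π ∧ φ = ⇑π ∘ ψ

/-- Acyclic-sink set: induces an acyclic subdigraph and emits no arcs. -/
def IsAcyclicSink {V : Type*} (A : V → V → Prop) (S : Set V) : Prop :=
  AcyclicOn A S ∧ ∀ u ∈ S, ∀ v ∉ S, ¬ A u v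

/-- The circular digraph `C(k,d)` on `ℤ_k`: arc `i → j` iff `(j - i) mod k ∈ {d, …, k-1}`. -/
def CircArc (k d : ℕ) : Fin k → Fin k → Prop :=
  fun i j => d ≤ (j.val + k - i.val) % k

/-- There is a directed cycle of length `ℓ`. -/
def HasCycleOfLength {V : Type*} (A : V → V → Prop) (ℓ : ℕ) : Prop :=
  ∃ l : List V, l.length = ℓ ∧ l.Nodup ∧ List.Chain' A l ∧
    ∀ h : l ≠ [], A (l.getLast h) (l.head h)

theorem acyclicSink_iff_large_induced_have_sinks {V : Type*} [Fintype V]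
    (A : V → V → Prop) (j : ℕ) (hj : j ≤ Fintype.card V) :
    (∃ S : Set V, IsAcyclicSink A S ∧ S.ncard = j) ↔
      ∀ T : Set V, Fintype.card V - j < T.ncard → ∃ v ∈ T, ∀ u ∈ T, ¬ A v u := by
  constructor
  · rintro ⟨S, ⟨hacyc, hsink⟩, hcard⟩ T hT
    have hScompl : (Sᶜ : Set V).ncard = Fintype.card V - j := by
      have h := Set.ncard_add_ncard_compl S
      rw [Nat.card_eq_fintype_card, hcard] at h
      omega
    have hTS : (T ∩ S).Nonempty := by
      rw [Set.nonempty_iff_ne_empty]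
      intro h
      have hsub : T ⊆ Sᶜ := fun x hx hxS =>
        Set.eq_empty_iff_forall_notMem.mp h x ⟨hx, hxS⟩
      have := Set.ncard_le_ncard hsub (Set.toFinite _)
      omega
    set r : V → V → Prop := Relation.TransGen (Restrict A (T ∩ S)) with hr
    haveI : IsTrans V (flip r) := ⟨fun a b c h1 h2 => Relation.TransGen.trans h2 h1⟩
    haveI : IsIrrefl V (flip r) := by
      constructor
      intro a ha
      refine hacyc a ?_
      exact Relation.TransGen.mono (p := Restrict A S) (fun u w hw => ⟨hw.1.2, hw.2.1.2, hw.2.2⟩) a a ha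
    have wf := Finite.wellFounded_of_trans_of_irrefl (flip r)
    obtain ⟨v, hv, hmin⟩ := wf.has_min (T ∩ S) hTS
    refine ⟨v, hv.1, fun u hu hA => ?_⟩
    by_cases huS : u ∈ S
    · exact hmin u ⟨hu, huS⟩ (Relation.TransGen.single ⟨hv, ⟨hu, huS⟩, hA⟩)
    · exact hsink v hv.2 u huS hA
  · intro hall
    have main : ∀ j, j ≤ Fintype.card V →
        (∀ T : Set V, Fintype.card V - j < T.ncard → ∃ v ∈ T, ∀ u ∈ T, ¬ A v u) →
        ∃ S : Set V, IsAcyclicSink A S ∧ S.ncard = j := by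
      intro j
      induction j with
      | zero =>
        intro _ _
        refine ⟨∅, ⟨fun x hx => ?_, fun u hu => hu.elim⟩, Set.ncard_empty V⟩
        cases hx with
        | single h => exact h.1
        | tail _ h => exact h.1
      | succ j ih =>
        intro hj1 hall'
        obtain ⟨S, ⟨hacyc, hsink⟩, hcard⟩ := ih (le_trans (Nat.le_succ j) hj1)
          (fun T hT => hall' T (lt_of_le_of_lt (Nat.sub_le_sub_left (Nat.le_succ j) _) hT))
        have hScompl : (Sᶜ : Set V).ncard = Fintype.card V - j := by
          have h := Set.ncard_add_ncard_compl S
          rw [Nat.card_eq_fintype_card, hcard] at h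
          omega
        obtain ⟨v, hv, hvmin⟩ := hall' Sᶜ (by omega)
        have hvS : v ∉ S := hv
        have hvin : ∀ u, ¬ Restrict A (insert v S) u v := by
          rintro u ⟨huS', -, hA⟩
          rcases huS' with rfl | huS
          · exact hvmin u hv hA
          · exact hsink u huS v hvS hA
        have key : ∀ x y, Relation.TransGen (Restrict A (insert v S)) x y →
            y ≠ v ∧ (x = v ∨ Relation.TransGen (Restrict A S) x y) := by
          intro x y h
          induction h with
          | single h =>
            rename_i b
            have hbv : b ≠ v := fun he => hvin x (he ▸ h)
            refine ⟨hbv, ?_⟩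
            rcases h.1 with rfl | hxS
            · exact Or.inl rfl
            · exact Or.inr (Relation.TransGen.single
                ⟨hxS, h.2.1.resolve_left hbv, h.2.2⟩)
          | tail h1 h2 ih =>
            rename_i b c
            have hcv : c ≠ v := fun he => hvin b (he ▸ h2)
            obtain ⟨hbv, hca⟩ := ih
            have hbc : Restrict A S b c :=
              ⟨h2.1.resolve_left hbv, h2.2.1.resolve_left hcv, h2.2.2⟩
            refine ⟨hcv, ?_⟩
            rcases hca with rfl | htg
            · exact Or.inl rfl
            · exact Or.inr (htg.tail hbc)
        refine ⟨insert v S, ⟨?_, ?_⟩, ?_⟩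
        · intro x hx
          obtain ⟨hne, hca⟩ := key x x hx
          rcases hca with rfl | htg
          · exact hne rfl
          · exact hacyc x htg
        · rintro u hu w hw hA
          rcases hu with rfl | huS
          · exact hvmin w (fun hwS => hw (Set.mem_insert_of_mem _ hwS)) hA
          · exact hsink u huS w (fun hwS => hw (Set.mem_insert_of_mem _ hwS)) hA
        · rw [Set.ncard_insert_of_notMem hvS, hcard]
    exact main j hj hall
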